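/- arXiv:2602.16407 — 2 statements merged into one kernel-verified Lean document; each statement's English description precedes it below -/
import Mathlib

section
/- Let Λ > 1, set a := Λ/(Λ−1) and b := 1/(Λ−1), and let x > a + 10. Define γ_j := ((x+j−1)/(x+j)) · ((x+j−a)/(x+j+b)) for j ≥ 1. Then for all n ≥ 1, the product β_n := ∏_{j=1}^n γ_j satisfies β_n ≤ ((x+b+1)/(x+b+n+1))^{2Λ/(Λ−1)}. -/
private lemma keyfac (b y : ℝ) (hb : 0 < b) (hy : 12 + 2 * b ≤ y) :
    ((y - b - 1) / (y - b)) * ((y - 1 - 2 * b) / y) ≤ (y / (y + 1)) ^ (2 + 2 * b) := by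
  have h0 : (0:ℝ) < y - b := by nlinarith
  have h1 : (0:ℝ) < y := by nlinarith
  have h2 : (0:ℝ) < y + 1 := by nlinarith
  have stepA : ((y - b - 1) / (y - b)) * ((y - 1 - 2 * b) / y)
      ≤ 1 - (2 + 2 * b) / (y + 1) := by
    have key : (1 - (2 + 2 * b) / (y + 1)) - ((y - b - 1) / (y - b)) * ((y - 1 - 2 * b) / y)
        = (b + 1) * (y - 2 * b - 1) / ((y - b) * y * (y + 1)) := by
      field_simp
      ring
    nlinarith [div_nonneg (by nlinarith : (0:ℝ) ≤ (b + 1) * (y - 2 * b - 1))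
      (by positivity : (0:ℝ) ≤ (y - b) * y * (y + 1))]
  refine stepA.trans ?_
  have hz : (-1:ℝ) ≤ -1 / (y + 1) := by
    rw [neg_div, neg_le_neg_iff]
    rw [div_le_one h2]; nlinarith
  have hp : (1:ℝ) ≤ 2 + 2 * b := by nlinarith
  have := one_add_mul_self_le_rpow_one_add hz hp
  have e1 : 1 + (2 + 2 * b) * (-1 / (y + 1)) = 1 - (2 + 2 * b) / (y + 1) := by ring
  have e2 : 1 + (-1 / (y + 1)) = y / (y + 1) := by field_simp; ring
  rw [e1, e2] at this
  exact this

theorem stmt_7 (Λ x : ℝ) (hΛ : 1 < Λ)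
    (hx : Λ / (Λ - 1) + 10 < x) (n : ℕ) (hn : 1 ≤ n) :
    (∏ j ∈ Finset.Icc 1 n,
        ((x + j - 1) / (x + j)) *
          ((x + j - Λ / (Λ - 1)) / (x + j + 1 / (Λ - 1))))
      ≤ ((x + 1 / (Λ - 1) + 1) / (x + 1 / (Λ - 1) + n + 1)) ^ (2 * Λ / (Λ - 1)) := by
  have hΛ1 : (0:ℝ) < Λ - 1 := by linarith
  set b := 1 / (Λ - 1) with hbdef
  have hb : 0 < b := by positivity
  have ha : Λ / (Λ - 1) = 1 + b := by rw [hbdef]; field_simp; ring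
  have hs : 2 * Λ / (Λ - 1) = 2 + 2 * b := by rw [hbdef]; field_simp; ring
  have hx' : 11 + b < x := by rw [ha] at hx; linarith
  -- per-factor bound
  have key : ∀ t : ℝ, 1 ≤ t →
      ((x + t - 1) / (x + t)) * ((x + t - Λ / (Λ - 1)) / (x + t + b))
        ≤ ((x + b + t) / (x + b + t + 1)) ^ (2 + 2 * b) := by
    intro t ht
    have hy : 12 + 2 * b ≤ x + b + t := by linarith
    have := keyfac b (x + b + t) hb hy
    have e1 : x + b + t - b = x + t := by ring
    have e2 : x + b + t - b - 1 = x + t - 1 := by ring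
    have e3 : x + b + t - 1 - 2 * b = x + t - Λ / (Λ - 1) := by rw [ha]; ring
    rw [e2, e1, e3] at this
    calc ((x + t - 1) / (x + t)) * ((x + t - Λ / (Λ - 1)) / (x + t + b))
        = ((x + t - 1) / (x + t)) * ((x + t - Λ / (Λ - 1)) / (x + b + t)) := by ring_nf
      _ ≤ _ := this
  -- nonnegativity of each factor
  have fnn : ∀ t : ℝ, 1 ≤ t →
      0 ≤ ((x + t - 1) / (x + t)) * ((x + t - Λ / (Λ - 1)) / (x + t + b)) := by
    intro t ht
    have h1 : 0 ≤ x + t - 1 := by linarith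
    have h2 : 0 < x + t := by linarith
    have h3 : 0 ≤ x + t - Λ / (Λ - 1) := by rw [ha]; linarith
    have h4 : 0 < x + t + b := by linarith
    positivity
  rw [hs]
  induction n, hn using Nat.le_induction with
  | base =>
      simp only [Finset.Icc_self, Finset.prod_singleton, Nat.cast_one]
      have := key 1 le_rfl
      convert this using 3
  | succ n hn ih =>
      rw [Finset.prod_Icc_succ_top (by omega : 1 ≤ n + 1)]
      have ht : (1:ℝ) ≤ ((n:ℝ) + 1) := by
        have : (1:ℝ) ≤ (n:ℝ) := by exact_mod_cast hn
        linarith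
      have hcast : ((n+1 : ℕ) : ℝ) = (n:ℝ) + 1 := by push_cast; ring
      have hk := key ((n:ℝ) + 1) ht
      have hnn := fnn ((n:ℝ) + 1) ht
      have hn0 : (0:ℝ) ≤ (n:ℝ) := Nat.cast_nonneg n
      have hd1 : (0:ℝ) < x + b + ↑n + 1 := by linarith
      have hd2 : (0:ℝ) < x + b + ((n:ℝ) + 1) + 1 := by linarith
      have hnum : (0:ℝ) < x + b + 1 := by linarith
      have hprod_nn : (0:ℝ) ≤ (x + b + 1) / (x + b + ↑n + 1) :=
        le_of_lt (div_pos hnum hd1)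
      have hRn : (0:ℝ) ≤ ((x + b + 1) / (x + b + ↑n + 1)) ^ (2 + 2 * b) :=
        Real.rpow_nonneg hprod_nn _
      calc (∏ j ∈ Finset.Icc 1 n, ((x + ↑j - 1) / (x + ↑j)) *
              ((x + ↑j - Λ / (Λ - 1)) / (x + ↑j + b))) *
            (((x + ↑(n+1) - 1) / (x + ↑(n+1))) *
              ((x + ↑(n+1) - Λ / (Λ - 1)) / (x + ↑(n+1) + b)))
          ≤ ((x + b + 1) / (x + b + ↑n + 1)) ^ (2 + 2 * b) *
              ((x + b + ((n:ℝ) + 1)) / (x + b + ((n:ℝ) + 1) + 1)) ^ (2 + 2 * b) := by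
            rw [hcast]
            exact mul_le_mul ih hk hnn hRn
        _ = (((x + b + 1) / (x + b + ↑n + 1)) *
              ((x + b + ((n:ℝ) + 1)) / (x + b + ((n:ℝ) + 1) + 1))) ^ (2 + 2 * b) := by
            rw [← Real.mul_rpow hprod_nn]
            exact le_of_lt (div_pos (by linarith) hd2)
        _ = ((x + b + 1) / (x + b + ↑(n+1) + 1)) ^ (2 + 2 * b) := by
            congr 1
            have h1 : (x + b + ↑n + 1) ≠ 0 := ne_of_gt hd1
            have h2 : (x + b + ((n:ℝ) + 1) + 1) ≠ 0 := ne_of_gt hd2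
            rw [hcast]
            field_simp
            ring
end

section
/- Let Λ > 1 and let x > Λ/(Λ−1) + 10. For j ≥ 1 define γ_j := (1 − Λ/(Λ(x+j) − (x+j−1))) · (1 − Λ/((Λ−1)(x+j))). Then there exists a constant c > 0 depending only on Λ and on a lower bound ā for x such that ∏_{j=1}^n γ_j ≥ c · (x/(x+n))^{2Λ/(Λ−1)} for all n ≥ 1. -/
open Finset Real

private lemma tele_prod (x : ℝ) (hx : 0 < x) (n : ℕ) :
    ∏ j ∈ Finset.Icc 1 n, ((x + j - 1) / (x + j)) = x / (x + n) := by
  induction n with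
  | zero => simp [hx.ne']
  | succ n ih =>
    have h1 : x + (n : ℝ) ≠ 0 := by positivity
    have h2 : x + ((n : ℝ) + 1) ≠ 0 := by positivity
    rw [Finset.prod_Icc_succ_top (by omega : 1 ≤ n + 1), ih]
    push_cast
    field_simp
    ring

private lemma tele_sum (x : ℝ) (hx : 0 < x) (n : ℕ) :
    ∑ j ∈ Finset.Icc 1 n, (1 / (x + j - 1) - 1 / (x + j)) = 1 / x - 1 / (x + n) := by
  induction n with
  | zero => simp
  | succ n ih =>
    have h1 : x + (n : ℝ) ≠ 0 := by positivity
    have h2 : x + ((n : ℝ) + 1) ≠ 0 := by positivity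
    rw [Finset.sum_Icc_succ_top (by omega : 1 ≤ n + 1), ih]
    push_cast
    ring

private lemma aux_factor (K y : ℝ) (hK : 1 < K) (hy : K + 11 ≤ y) :
    ((y - 1) / y) ^ (K : ℝ) * Real.exp (-(K ^ 2 * (1 + K)) * (1 / (y - 1) - 1 / y))
      ≤ 1 - K / y := by
  have hK0 : 0 < K := by linarith
  have hy0 : 0 < y := by linarith
  have hy1 : 0 < y - 1 := by linarith
  have hyK : 0 < y - K := by linarith
  have ht : 0 < 1 - K / y := by
    have : K / y < 1 := (div_lt_one hy0).mpr (by linarith)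
    linarith
  have hr : 0 < (y - 1) / y := div_pos hy1 hy0
  rw [Real.rpow_def_of_pos hr, ← Real.exp_add]
  rw [show (1 : ℝ) - K / y = Real.exp (Real.log (1 - K / y)) from (Real.exp_log ht).symm]
  apply Real.exp_le_exp.mpr
  have h1 : Real.log ((y - 1) / y) ≤ -(1 / y) := by
    have hle := Real.log_le_sub_one_of_pos hr
    have he : (y - 1) / y - 1 = -(1 / y) := by field_simp; ring
    linarith
  have h2 : -(K / (y - K)) ≤ Real.log (1 - K / y) := by
    have hinv := Real.log_le_sub_one_of_pos (show (0:ℝ) < (1 - K / y)⁻¹ by positivity)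
    rw [Real.log_inv] at hinv
    have he : (1 - K / y)⁻¹ - 1 = K / (y - K) := by
      rw [show 1 - K / y = (y - K) / y by field_simp]
      field_simp
      ring
    linarith
  have h3 : -(K ^ 2 * (1 + K) * (1 / (y - 1) - 1 / y)) ≤ -(K / (y - K)) + K / y := by
    have e1 : -(K / (y - K)) + K / y = -(K ^ 2 / (y * (y - K))) := by
      field_simp
      ring
    have e2 : 1 / (y - 1) - 1 / y = 1 / (y * (y - 1)) := by
      field_simp
      ring
    rw [e1, e2, mul_one_div, neg_le_neg_iff, div_le_div_iff₀ (by positivity) (by positivity)]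
    nlinarith [mul_nonneg (mul_nonneg (sq_nonneg K) hK0.le) (mul_nonneg hy0.le (by linarith : (0:ℝ) ≤ y - K - 1)), sq_nonneg K, mul_pos hy0 hyK]
  have h4 : Real.log ((y - 1) / y) * K ≤ -(K / y) := by
    calc Real.log ((y - 1) / y) * K ≤ -(1 / y) * K := mul_le_mul_of_nonneg_right h1 hK0.le
      _ = -(K / y) := by ring
  linarith

theorem stmt_8 (Λ abar : ℝ) (hΛ : 1 < Λ) (habar : Λ / (Λ - 1) + 10 < abar) :
    ∃ c : ℝ, 0 < c ∧ ∀ x : ℝ, abar ≤ x → ∀ n : ℕ, 1 ≤ n →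
      c * (x / (x + n)) ^ (2 * Λ / (Λ - 1)) ≤
        ∏ j ∈ Finset.Icc 1 n,
          (1 - Λ / (Λ * (x + j) - (x + j - 1))) * (1 - Λ / ((Λ - 1) * (x + j))) := by
  have hΛ0 : 0 < Λ - 1 := by linarith
  set K := Λ / (Λ - 1) with hKdef
  have hK1 : 1 < K := (one_lt_div hΛ0).mpr (by linarith)
  have hK0 : 0 < K := lt_trans one_pos hK1
  have habar0 : 0 < abar := by linarith
  set β := K ^ 2 * (1 + K) with hβdef
  have hβ0 : 0 < β := by positivity
  refine ⟨Real.exp (-(2 * β) / abar), Real.exp_pos _, ?_⟩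
  intro x hx n hn
  have hx0 : 0 < x := lt_of_lt_of_le habar0 hx
  have hxn : 0 < x + (n : ℝ) := by positivity
  set g : ℕ → ℝ := fun j =>
    ((x + j - 1) / (x + j)) ^ (K : ℝ) * Real.exp (-β * (1 / (x + j - 1) - 1 / (x + j))) with hgdef
  have hgnn : ∀ j : ℕ, 1 ≤ j → 0 ≤ g j := by
    intro j hj
    have hj1 : (1 : ℝ) ≤ (j : ℝ) := by exact_mod_cast hj
    have : (0:ℝ) ≤ (x + j - 1) / (x + j) := by
      apply div_nonneg <;> linarith
    exact mul_nonneg (Real.rpow_nonneg this K) (Real.exp_nonneg _)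
  have key : ∀ j ∈ Finset.Icc 1 n, g j * g j ≤
      (1 - Λ / (Λ * (x + j) - (x + j - 1))) * (1 - Λ / ((Λ - 1) * (x + j))) := by
    intro j hj
    have hj1 : 1 ≤ j := (Finset.mem_Icc.mp hj).1
    have hj1' : (1 : ℝ) ≤ (j : ℝ) := by exact_mod_cast hj1
    have hyK : K + 11 ≤ x + j := by linarith
    have hy0 : 0 < x + (j : ℝ) := by linarith
    have haux := aux_factor K (x + j) hK1 hyK
    have ht : 0 ≤ 1 - K / (x + j) := by
      have : K / (x + j) ≤ 1 := by
        rw [div_le_one hy0]; linarith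
      linarith
    have hf2 : (1 : ℝ) - Λ / ((Λ - 1) * (x + j)) = 1 - K / (x + j) := by
      rw [hKdef, div_div]
    have hf1 : 1 - K / (x + j) ≤ 1 - Λ / (Λ * (x + j) - (x + j - 1)) := by
      have hKy : K / (x + j) = Λ / ((Λ - 1) * (x + j)) := by rw [hKdef, div_div]
      have hden0 : 0 < (Λ - 1) * (x + j) := mul_pos hΛ0 hy0
      have hden : (Λ - 1) * (x + j) ≤ Λ * (x + j) - (x + j - 1) := by nlinarith
      have : Λ / (Λ * (x + j) - (x + j - 1)) ≤ Λ / ((Λ - 1) * (x + j)) :=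
        div_le_div_of_nonneg_left (by linarith) hden0 hden
      rw [hKy]; linarith
    calc g j * g j ≤ (1 - K / (x + j)) * (1 - K / (x + j)) :=
          mul_le_mul haux haux (hgnn j hj1) ht
      _ ≤ (1 - Λ / (Λ * (x + j) - (x + j - 1))) * (1 - Λ / ((Λ - 1) * (x + j))) := by
          rw [hf2]
          exact mul_le_mul_of_nonneg_right hf1 ht
  have hprod : ∏ j ∈ Finset.Icc 1 n, (g j * g j) ≤
      ∏ j ∈ Finset.Icc 1 n, (1 - Λ / (Λ * (x + j) - (x + j - 1))) * (1 - Λ / ((Λ - 1) * (x + j))) := by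
    apply Finset.prod_le_prod
    · intro j hj
      have hj1 := (Finset.mem_Icc.mp hj).1
      exact mul_nonneg (hgnn j hj1) (hgnn j hj1)
    · exact key
  set s : ℝ := 1 / x - 1 / (x + n) with hsdef
  have hg : ∏ j ∈ Finset.Icc 1 n, g j = (x / (x + n)) ^ (K : ℝ) * Real.exp (-β * s) := by
    rw [hgdef, Finset.prod_mul_distrib]
    congr 1
    · rw [Real.finset_prod_rpow _ _ (fun j hj => by
        have hj1 : (1:ℝ) ≤ (j : ℝ) := by exact_mod_cast (Finset.mem_Icc.mp hj).1
        apply div_nonneg <;> linarith) K]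
      rw [tele_prod x hx0 n]
    · rw [← Real.exp_sum]
      congr 1
      rw [← Finset.mul_sum, tele_sum x hx0 n]
  have hs1 : s ≤ 1 / abar := by
    have : 1 / x ≤ 1 / abar := one_div_le_one_div_of_le habar0 hx
    have : 0 ≤ 1 / (x + (n:ℝ)) := by positivity
    rw [hsdef]; linarith [one_div_le_one_div_of_le habar0 hx]
  have hrr : 0 < x / (x + (n:ℝ)) := div_pos hx0 hxn
  have hexp_eq : 2 * Λ / (Λ - 1) = K + K := by rw [hKdef, ← add_div]; ring_nf
  calc Real.exp (-(2 * β) / abar) * (x / (x + n)) ^ (2 * Λ / (Λ - 1))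
      = Real.exp (-(2 * β) / abar) * ((x / (x + n)) ^ (K:ℝ) * (x / (x + n)) ^ (K:ℝ)) := by
        rw [hexp_eq, Real.rpow_add hrr]
    _ ≤ (Real.exp (-β * s) * Real.exp (-β * s)) * ((x / (x + n)) ^ (K:ℝ) * (x / (x + n)) ^ (K:ℝ)) := by
        apply mul_le_mul_of_nonneg_right _ (by positivity)
        rw [← Real.exp_add]
        apply Real.exp_le_exp.mpr
        have h5 : β * s ≤ β / abar := by
          calc β * s ≤ β * (1 / abar) := mul_le_mul_of_nonneg_left hs1 hβ0.le
            _ = β / abar := by ring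
        have h6 : -(2 * β) / abar = -(2 * (β / abar)) := by ring
        rw [h6]
        linarith
    _ = (∏ j ∈ Finset.Icc 1 n, g j) * (∏ j ∈ Finset.Icc 1 n, g j) := by rw [hg]; ring
    _ = ∏ j ∈ Finset.Icc 1 n, (g j * g j) := by rw [← Finset.prod_mul_distrib]
    _ ≤ _ := hprod
end
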